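/- Suppose α₁ and α₂ are irrational, θ = (p₁/q₁)·α₁ + p₂/q₂ and θ·α₂ = (p₃/q₃)·α₁ + p₄/q₄ for integers p₁, p₂, p₃, p₄ and positive integers q₁, q₂, q₃, q₄. Then for every s ∈ ℝ, the point (−(p₁/q₁)·s, s mod 1, ((p₃/q₃) − α₂·(p₁/q₁))·s mod 1) lies in the closure of S. -/

import Mathlib

/-- The set `S = { (m − k·θ, k·α₁ mod 1, m·α₂ mod 1) : k, m ∈ ℕ }` in
`ℝ × (ℝ/ℤ) × (ℝ/ℤ)`. -/
def Sset (θ α₁ α₂ : ℝ) : Set (ℝ × AddCircle (1 : ℝ) × AddCircle (1 : ℝ)) :=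
  {x | ∃ k m : ℕ, x = ((m : ℝ) - (k : ℝ) * θ,
    (((k : ℝ) * α₁ : ℝ) : AddCircle (1 : ℝ)),
    (((m : ℝ) * α₂ : ℝ) : AddCircle (1 : ℝ)))}

open Filter Topology

private lemma coe_add_int_circle (x : ℝ) (z : ℤ) :
    ((x + z : ℝ) : AddCircle (1 : ℝ)) = (x : AddCircle (1 : ℝ)) := by
  have hz : ((z : ℝ) : AddCircle (1 : ℝ)) = 0 := by
    have h := (AddCircle.coe_zsmul (p := (1 : ℝ)) (n := z) (x := (1 : ℝ)))
    simp only [zsmul_eq_mul, mul_one] at h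
    rw [h, AddCircle.coe_period, smul_zero]
  rw [AddCircle.coe_add, hz, add_zero]

/-- Forward-orbit density of an irrational rotation: for any irrational `β`, target `c`,
`ε > 0` and bound `N`, there is `n ≥ N` with `n β` within `ε` of `c` modulo `1`. -/
private lemma dense_forward (β : ℝ) (hβ : Irrational β) (c ε : ℝ) (hε : 0 < ε) (N : ℕ) :
    ∃ n : ℕ, N ≤ n ∧ ∃ J : ℤ, |(n : ℝ) * β - c - J| < ε := by
  obtain ⟨n₀, hn₀⟩ := exists_nat_one_div_lt hε
  obtain ⟨j, k, hk0, hkn, hjk⟩ := Real.exists_int_int_abs_mul_sub_le β (Nat.succ_pos n₀)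
  set δ : ℝ := (k : ℝ) * β - j with hδdef
  have hkR : (0 : ℝ) < (k : ℝ) := by exact_mod_cast hk0
  have hδne : δ ≠ 0 := by
    intro h
    have h1 : (k : ℝ) * β = (j : ℝ) := by
      have := sub_eq_zero.mp h
      linarith [this]
    have h2 : Irrational ((k : ℝ) * β) := hβ.intCast_mul hk0.ne'
    rw [h1] at h2
    exact (Int.not_irrational j) h2
  have hδlt : |δ| < ε := by
    refine lt_of_le_of_lt hjk ?_
    refine lt_of_le_of_lt ?_ hn₀
    apply one_div_le_one_div_of_le
    · positivity
    · push_cast; linarith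
  set K : ℕ := k.toNat with hK
  have hK1 : 1 ≤ K := by
    have := Int.toNat_of_nonneg hk0.le
    omega
  have hKR : ((K : ℕ) : ℝ) = (k : ℝ) := by
    rw [hK]; exact_mod_cast congrArg (fun z : ℤ => (z : ℝ)) (Int.toNat_of_nonneg hk0.le)
  rcases lt_or_gt_of_ne hδne with hneg | hpos
  · -- δ < 0
    set a : ℝ := (N : ℝ) * δ with ha
    set j' : ℤ := ⌊a - c⌋ with hj'
    have hj'1 : (j' : ℝ) ≤ a - c := Int.floor_le _
    have hmδ : (0 : ℝ) < -δ := by linarith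
    set t : ℕ := ⌈(a - c - j') / (-δ)⌉₊ with ht
    have hnum : 0 ≤ (a - c - j') / (-δ) := div_nonneg (by linarith) hmδ.le
    have ht1 : (a - c - j') / (-δ) ≤ (t : ℝ) := Nat.le_ceil _
    have ht2 : (t : ℝ) < (a - c - j') / (-δ) + 1 := Nat.ceil_lt_add_one hnum
    have h1 : a - c - j' ≤ (t : ℝ) * (-δ) := by
      rw [div_le_iff₀ hmδ] at ht1; linarith
    have hq : (a - c - j') / (-δ) * (-δ) = a - c - j' := div_mul_cancel₀ _ hmδ.ne'
    have h2 : (t : ℝ) * (-δ) < a - c - j' + (-δ) := by nlinarith [ht2]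
    refine ⟨(N + t) * K, ?_, ((N + t : ℕ) : ℤ) * j + j', ?_⟩
    · calc N ≤ N + t := Nat.le_add_right _ _
        _ ≤ (N + t) * K := Nat.le_mul_of_pos_right _ (by omega)
    · have hval : (((N + t) * K : ℕ) : ℝ) * β - c - ((((N + t : ℕ) : ℤ) * j + j' : ℤ) : ℝ)
          = a + (t : ℝ) * δ - (c + j') := by
        push_cast [hKR]
        rw [hδdef, ha]
        push_cast
        ring
      rw [hval, abs_lt]
      constructor
      · have : -|δ| ≤ δ := neg_abs_le δ
        linarith
      · linarith
  · -- δ > 0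
    set a : ℝ := (N : ℝ) * δ with ha
    set j' : ℤ := ⌈a - c⌉ with hj'
    have hj'1 : a - c ≤ (j' : ℝ) := Int.le_ceil _
    set t : ℕ := ⌈(c + j' - a) / δ⌉₊ with ht
    have hnum : 0 ≤ (c + j' - a) / δ := div_nonneg (by linarith) hpos.le
    have ht1 : (c + j' - a) / δ ≤ (t : ℝ) := Nat.le_ceil _
    have ht2 : (t : ℝ) < (c + j' - a) / δ + 1 := Nat.ceil_lt_add_one hnum
    have h1 : c + (j' : ℝ) - a ≤ (t : ℝ) * δ := by
      rw [div_le_iff₀ hpos] at ht1; linarith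
    have hq : (c + j' - a) / δ * δ = c + j' - a := div_mul_cancel₀ _ hpos.ne'
    have h2 : (t : ℝ) * δ < c + j' - a + δ := by nlinarith [ht2]
    refine ⟨(N + t) * K, ?_, ((N + t : ℕ) : ℤ) * j + j', ?_⟩
    · calc N ≤ N + t := Nat.le_add_right _ _
        _ ≤ (N + t) * K := Nat.le_mul_of_pos_right _ (by omega)
    · have hval : (((N + t) * K : ℕ) : ℝ) * β - c - ((((N + t : ℕ) : ℤ) * j + j' : ℤ) : ℝ)
          = a + (t : ℝ) * δ - (c + j') := by
        push_cast [hKR]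
        rw [hδdef, ha]
        push_cast
        ring
      rw [hval, abs_lt]
      constructor
      · linarith
      · have : δ ≤ |δ| := le_abs_self δ
        linarith

/-- Suppose `α₁` and `α₂` are irrational, `θ = (p₁/q₁)·α₁ + p₂/q₂` and
`θ·α₂ = (p₃/q₃)·α₁ + p₄/q₄`. Then for every `s ∈ ℝ`, the point
`(−(p₁/q₁)·s, s mod 1, ((p₃/q₃) − α₂·(p₁/q₁))·s mod 1)` lies in the closure of `S`. -/
theorem stmt14 (θ α₁ α₂ : ℝ) (hθ : 0 < θ)
    (hα₁ : α₁ ∈ Set.Ioo (0 : ℝ) (1 / 2)) (hα₂ : α₂ ∈ Set.Ioo (0 : ℝ) (1 / 2))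
    (hirr1 : Irrational α₁) (hirr2 : Irrational α₂)
    (p₁ p₂ p₃ p₄ : ℤ) (q₁ q₂ q₃ q₄ : ℕ)
    (hq₁ : 0 < q₁) (hq₂ : 0 < q₂) (hq₃ : 0 < q₃) (hq₄ : 0 < q₄)
    (hθeq : θ = (p₁ : ℝ) / (q₁ : ℝ) * α₁ + (p₂ : ℝ) / (q₂ : ℝ))
    (heq : θ * α₂ = (p₃ : ℝ) / (q₃ : ℝ) * α₁ + (p₄ : ℝ) / (q₄ : ℝ)) :
    ∀ s : ℝ,
      (-((p₁ : ℝ) / (q₁ : ℝ)) * s, ((s : ℝ) : AddCircle (1 : ℝ)),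
        ((((p₃ : ℝ) / (q₃ : ℝ) - α₂ * ((p₁ : ℝ) / (q₁ : ℝ))) * s : ℝ) :
          AddCircle (1 : ℝ))) ∈ closure (Sset θ α₁ α₂) := by
  intro s
  have hq1R : ((q₁ : ℝ)) ≠ 0 := Nat.cast_ne_zero.2 hq₁.ne'
  have hq2R : ((q₂ : ℝ)) ≠ 0 := Nat.cast_ne_zero.2 hq₂.ne'
  have hq3R : ((q₃ : ℝ)) ≠ 0 := Nat.cast_ne_zero.2 hq₃.ne'
  have hq4R : ((q₄ : ℝ)) ≠ 0 := Nat.cast_ne_zero.2 hq₄.ne'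
  set Q : ℕ := q₁ * q₂ * q₃ * q₄ with hQdef
  set L : ℕ := q₁ * q₃ with hLdef
  have hQ0 : 0 < Q := by positivity
  have hL0 : 0 < L := by positivity
  have hLR : (0 : ℝ) < (L : ℝ) := by exact_mod_cast hL0
  have hβ : Irrational ((Q : ℝ) * α₁ / (L : ℝ)) :=
    (hirr1.natCast_mul hQ0.ne').div_natCast hL0.ne'
  obtain ⟨N₀, hN₀⟩ := exists_nat_ge ((|(p₁ : ℝ) / (q₁ : ℝ)| * (|s| + 1)) / θ)
  have hN₀θ : |(p₁ : ℝ) / (q₁ : ℝ)| * (|s| + 1) ≤ (N₀ : ℝ) * θ := by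
    rw [div_le_iff₀ hθ] at hN₀; linarith
  have H : ∀ i : ℕ, ∃ n : ℕ, N₀ ≤ n ∧ ∃ J : ℤ,
      |(n : ℝ) * (Q : ℝ) * α₁ - s - (J : ℝ) * (L : ℝ)| < 1 / ((i : ℝ) + 1) := by
    intro i
    have hεpos : (0 : ℝ) < 1 / (((i : ℝ) + 1) * (L : ℝ)) := by positivity
    obtain ⟨n, hn, J, hJ⟩ := dense_forward _ hβ (s / (L : ℝ)) _ hεpos N₀
    refine ⟨n, hn, J, ?_⟩
    have habs : |(n : ℝ) * (Q : ℝ) * α₁ - s - (J : ℝ) * (L : ℝ)|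
        = (L : ℝ) * |(n : ℝ) * ((Q : ℝ) * α₁ / (L : ℝ)) - s / (L : ℝ) - (J : ℝ)| := by
      rw [← abs_of_pos hLR, ← abs_mul]
      congr 1
      field_simp
      rw [abs_of_pos hLR]
      ring
    rw [habs]
    have := mul_lt_mul_of_pos_left hJ hLR
    calc (L : ℝ) * |(n : ℝ) * ((Q : ℝ) * α₁ / (L : ℝ)) - s / (L : ℝ) - (J : ℝ)|
        < (L : ℝ) * (1 / (((i : ℝ) + 1) * (L : ℝ))) := this
      _ = 1 / ((i : ℝ) + 1) := by field_simp
  choose nn hnnN JJ hJJ using H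
  -- abbreviations
  set e : ℕ → ℝ := fun i => (nn i : ℝ) * (Q : ℝ) * α₁ - s - (JJ i : ℝ) * (L : ℝ) with he_def
  set kk : ℕ → ℕ := fun i => nn i * Q with hkk_def
  set mz : ℕ → ℤ := fun i =>
    (nn i : ℤ) * q₁ * q₃ * q₄ * p₂ + p₁ * JJ i * q₃ with hmz_def
  set zD : ℕ → ℤ := fun i =>
    (nn i : ℤ) * q₁ * q₂ * q₃ * p₄ + p₃ * JJ i * q₁ with hzD_def
  have he_lt : ∀ i, |e i| < 1 / ((i : ℝ) + 1) := fun i => hJJ i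
  have he0 : Tendsto e atTop (𝓝 0) := by
    apply squeeze_zero_norm (fun i => (he_lt i).le)
    exact tendsto_one_div_add_atTop_nhds_zero_nat
  have g2 : ∀ i, ((mz i : ℤ) : ℝ) - ((kk i : ℕ) : ℝ) * θ
      = -((p₁ : ℝ) / (q₁ : ℝ)) * (s + e i) := by
    intro i
    simp only [hmz_def, hkk_def, he_def, hQdef, hLdef]
    rw [hθeq]
    push_cast
    field_simp
    ring
  have g3 : ∀ i, ((mz i : ℤ) : ℝ) * α₂
      = ((p₃ : ℝ) / (q₃ : ℝ) - α₂ * ((p₁ : ℝ) / (q₁ : ℝ))) * (s + e i) + ((zD i : ℤ) : ℝ) := by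
    intro i
    have step1 : ((mz i : ℤ) : ℝ) * α₂
        = ((kk i : ℕ) : ℝ) * (θ * α₂) + (-((p₁ : ℝ) / (q₁ : ℝ)) * (s + e i)) * α₂ := by
      have h := g2 i
      linear_combination α₂ * h
    rw [step1, heq]
    simp only [hkk_def, he_def, hzD_def, hQdef, hLdef]
    push_cast
    field_simp
    ring
  have hm0 : ∀ i, 0 ≤ mz i := by
    intro i
    have hei1 : |e i| ≤ 1 := by
      refine (he_lt i).le.trans ?_
      rw [div_le_one (by positivity)]
      have : (0 : ℝ) ≤ (i : ℝ) := Nat.cast_nonneg i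
      linarith
    have hki : (N₀ : ℝ) ≤ ((kk i : ℕ) : ℝ) := by
      have : N₀ ≤ kk i := by
        calc N₀ ≤ nn i := hnnN i
          _ ≤ nn i * Q := Nat.le_mul_of_pos_right _ hQ0
      exact_mod_cast this
    have hmr : ((mz i : ℤ) : ℝ) = ((kk i : ℕ) : ℝ) * θ
        - ((p₁ : ℝ) / (q₁ : ℝ)) * (s + e i) := by
      have := g2 i; linarith
    have habs : ((p₁ : ℝ) / (q₁ : ℝ)) * (s + e i) ≤ |(p₁ : ℝ) / (q₁ : ℝ)| * (|s| + 1) := by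
      calc ((p₁ : ℝ) / (q₁ : ℝ)) * (s + e i) ≤ |((p₁ : ℝ) / (q₁ : ℝ)) * (s + e i)| :=
            le_abs_self _
        _ = |(p₁ : ℝ) / (q₁ : ℝ)| * |s + e i| := abs_mul _ _
        _ ≤ |(p₁ : ℝ) / (q₁ : ℝ)| * (|s| + 1) := by
            apply mul_le_mul_of_nonneg_left _ (abs_nonneg _)
            calc |s + e i| ≤ |s| + |e i| := abs_add_le _ _
              _ ≤ |s| + 1 := by linarith
    have hkθ : (N₀ : ℝ) * θ ≤ ((kk i : ℕ) : ℝ) * θ :=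
      mul_le_mul_of_nonneg_right hki hθ.le
    have : (0 : ℝ) ≤ ((mz i : ℤ) : ℝ) := by rw [hmr]; linarith
    exact_mod_cast this
  set mm : ℕ → ℕ := fun i => (mz i).toNat with hmm_def
  have hmcast : ∀ i, ((mm i : ℕ) : ℝ) = ((mz i : ℤ) : ℝ) := by
    intro i
    simp only [hmm_def]
    exact_mod_cast congrArg (fun z : ℤ => (z : ℝ)) (Int.toNat_of_nonneg (hm0 i))
  -- the approximating sequence in S
  set F : ℕ → ℝ × AddCircle (1 : ℝ) × AddCircle (1 : ℝ) := fun i =>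
    (((mm i : ℕ) : ℝ) - ((kk i : ℕ) : ℝ) * θ,
      ((((kk i : ℕ) : ℝ) * α₁ : ℝ) : AddCircle (1 : ℝ)),
      ((((mm i : ℕ) : ℝ) * α₂ : ℝ) : AddCircle (1 : ℝ))) with hF_def
  have hmem : ∀ i, F i ∈ Sset θ α₁ α₂ := fun i => ⟨kk i, mm i, rfl⟩
  have hse : Tendsto (fun i => s + e i) atTop (𝓝 s) := by
    have := tendsto_const_nhds.add he0 (α := ℕ) (f := fun _ => s)
    simpa using this
  have T1 : Tendsto (fun i => ((mm i : ℕ) : ℝ) - ((kk i : ℕ) : ℝ) * θ) atTop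
      (𝓝 (-((p₁ : ℝ) / (q₁ : ℝ)) * s)) := by
    have heq1 : ∀ i, ((mm i : ℕ) : ℝ) - ((kk i : ℕ) : ℝ) * θ
        = -((p₁ : ℝ) / (q₁ : ℝ)) * (s + e i) := by
      intro i; rw [hmcast i]; exact g2 i
    have hlim : Tendsto (fun i => -((p₁ : ℝ) / (q₁ : ℝ)) * (s + e i)) atTop
        (𝓝 (-((p₁ : ℝ) / (q₁ : ℝ)) * s)) := hse.const_mul _
    exact hlim.congr (fun i => (heq1 i).symm)
  have hcont : Continuous ((↑) : ℝ → AddCircle (1 : ℝ)) := AddCircle.continuous_mk' 1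
  have T2 : Tendsto (fun i => ((((kk i : ℕ) : ℝ) * α₁ : ℝ) : AddCircle (1 : ℝ))) atTop
      (𝓝 ((s : ℝ) : AddCircle (1 : ℝ))) := by
    have heq2 : ∀ i, ((((kk i : ℕ) : ℝ) * α₁ : ℝ) : AddCircle (1 : ℝ))
        = (((s + e i : ℝ)) : AddCircle (1 : ℝ)) := by
      intro i
      have hx : ((kk i : ℕ) : ℝ) * α₁ = (s + e i) + ((JJ i * (L : ℤ) : ℤ) : ℝ) := by
        simp only [hkk_def, he_def]
        push_cast
        ring
      rw [hx, coe_add_int_circle]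
    have hlim : Tendsto (fun i => (((s + e i : ℝ)) : AddCircle (1 : ℝ))) atTop
        (𝓝 ((s : ℝ) : AddCircle (1 : ℝ))) := (hcont.tendsto s).comp hse
    exact hlim.congr (fun i => (heq2 i).symm)
  have hse3 : Tendsto
      (fun i => ((p₃ : ℝ) / (q₃ : ℝ) - α₂ * ((p₁ : ℝ) / (q₁ : ℝ))) * (s + e i)) atTop
      (𝓝 (((p₃ : ℝ) / (q₃ : ℝ) - α₂ * ((p₁ : ℝ) / (q₁ : ℝ))) * s)) := hse.const_mul _
  have T3 : Tendsto (fun i => ((((mm i : ℕ) : ℝ) * α₂ : ℝ) : AddCircle (1 : ℝ))) atTop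
      (𝓝 ((((p₃ : ℝ) / (q₃ : ℝ) - α₂ * ((p₁ : ℝ) / (q₁ : ℝ))) * s : ℝ) :
        AddCircle (1 : ℝ))) := by
    have heq3 : ∀ i, ((((mm i : ℕ) : ℝ) * α₂ : ℝ) : AddCircle (1 : ℝ))
        = ((((p₃ : ℝ) / (q₃ : ℝ) - α₂ * ((p₁ : ℝ) / (q₁ : ℝ))) * (s + e i) : ℝ) :
          AddCircle (1 : ℝ)) := by
      intro i
      have hx : ((mm i : ℕ) : ℝ) * α₂
          = ((p₃ : ℝ) / (q₃ : ℝ) - α₂ * ((p₁ : ℝ) / (q₁ : ℝ))) * (s + e i)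
            + ((zD i : ℤ) : ℝ) := by
        rw [hmcast i]; exact g3 i
      rw [hx, coe_add_int_circle]
    have hlim : Tendsto (fun i =>
        ((((p₃ : ℝ) / (q₃ : ℝ) - α₂ * ((p₁ : ℝ) / (q₁ : ℝ))) * (s + e i) : ℝ) :
          AddCircle (1 : ℝ))) atTop
        (𝓝 ((((p₃ : ℝ) / (q₃ : ℝ) - α₂ * ((p₁ : ℝ) / (q₁ : ℝ))) * s : ℝ) :
          AddCircle (1 : ℝ))) :=
      (hcont.tendsto _).comp hse3
    exact hlim.congr (fun i => (heq3 i).symm)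
  have hT : Tendsto F atTop (𝓝 (-((p₁ : ℝ) / (q₁ : ℝ)) * s, ((s : ℝ) : AddCircle (1 : ℝ)),
      ((((p₃ : ℝ) / (q₃ : ℝ) - α₂ * ((p₁ : ℝ) / (q₁ : ℝ))) * s : ℝ) :
        AddCircle (1 : ℝ)))) := T1.prodMk_nhds (T2.prodMk_nhds T3)
  exact mem_closure_of_tendsto hT (Filter.Eventually.of_forall hmem)
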